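/- For every n ≥ 1, the class of finite groups equipped with n automorphisms has the amalgamation property: let A, B, C be finite groups, let α₁,…,αₙ be automorphisms of A, let β₁,…,βₙ be automorphisms of B, and let γ₁,…,γₙ be automorphisms of C; if f : A → B and g : A → C are injective group homomorphisms satisfying f ∘ αᵢ = βᵢ ∘ f and g ∘ αᵢ = γᵢ ∘ g for each i, then there exist a finite group D, automorphisms δ₁,…,δₙ of D, and injective group homomorphisms s : B → D and t : C → D such that δᵢ ∘ s = s ∘ βᵢ and δᵢ ∘ t = t ∘ γᵢ for each i, and s ∘ f = t ∘ g. -/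

import Mathlib

namespace AmalgAux

variable {A B : Type} [Group A] [Group B]

/-- Right-coset setoid of `f.range` in `B`: `x ≈ y` iff `x = f a * y`. -/
def S (f : A →* B) : Setoid B :=
  ⟨fun x y => ∃ a, x = f a * y, by
    refine ⟨fun x => ⟨1, by simp⟩, ?_, ?_⟩
    · rintro x y ⟨a, rfl⟩; exact ⟨a⁻¹, by simp [mul_assoc]⟩
    · rintro x y z ⟨a, rfl⟩ ⟨a', rfl⟩; exact ⟨a * a', by simp [mul_assoc]⟩⟩

/-- The `A`-part of the decomposition `x = f (dA f x) * (⟦x⟧).out`. -/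
noncomputable def dA (f : A →* B) (x : B) : A :=
  (Classical.choose (Quotient.exact (Quotient.out_eq (Quotient.mk (S f) x))))⁻¹

lemma dA_spec (f : A →* B) (x : B) :
    x = f (dA f x) * (Quotient.mk (S f) x).out := by
  have h := Classical.choose_spec (Quotient.exact (Quotient.out_eq (Quotient.mk (S f) x)))
  rw [dA, map_inv, eq_inv_mul_iff_mul_eq, ← h]

lemma key (f : A →* B) (hf : Function.Injective f) {x : B} {a : A} {q : Quotient (S f)}
    (h : x = f a * q.out) : dA f x = a ∧ Quotient.mk (S f) x = q := by
  have hq : Quotient.mk (S f) x = q := by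
    rw [← Quotient.out_eq q]; exact Quotient.sound ⟨a, h⟩
  refine ⟨?_, hq⟩
  have hs := dA_spec f x
  rw [hq] at hs
  exact (hf (mul_right_cancel (h.symm.trans hs))).symm

/-- Action of `b : B` on pairs `(a, q) : A × (right cosets)`. -/
noncomputable def aux (f : A →* B) (b : B) (y : A × Quotient (S f)) : A × Quotient (S f) :=
  ⟨dA f (b * f y.1 * y.2.out), Quotient.mk (S f) (b * f y.1 * y.2.out)⟩

lemma aux_one (f : A →* B) (hf : Function.Injective f) (y : A × Quotient (S f)) :
    aux f 1 y = y := by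
  have := key f hf (x := f y.1 * y.2.out) (a := y.1) (q := y.2) rfl
  simp [aux, this.1, this.2]

lemma aux_mul (f : A →* B) (b₁ b₂ : B) (y : A × Quotient (S f)) :
    aux f (b₁ * b₂) y = aux f b₁ (aux f b₂ y) := by
  have : b₁ * f (dA f (b₂ * f y.1 * y.2.out)) *
      (Quotient.mk (S f) (b₂ * f y.1 * y.2.out)).out = b₁ * b₂ * f y.1 * y.2.out := by
    rw [mul_assoc b₁, ← dA_spec f (b₂ * f y.1 * y.2.out)]; group
  simp only [aux, this]

lemma aux_f (f : A →* B) (hf : Function.Injective f) (a₀ : A) (y : A × Quotient (S f)) :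
    aux f (f a₀) y = ⟨a₀ * y.1, y.2⟩ := by
  have := key f hf (x := f a₀ * f y.1 * y.2.out) (a := a₀ * y.1) (q := y.2) (by
    rw [map_mul, mul_assoc])
  simp [aux, this.1, this.2]

lemma aux_faithful (f : A →* B) (hf : Function.Injective f) {b : B}
    (h : ∀ y, aux f b y = y) : b = 1 := by
  obtain ⟨p⟩ : Nonempty (Quotient (S f)) := ⟨Quotient.mk _ 1⟩
  have h1 := h ⟨1, p⟩
  have hs := dA_spec f (b * f 1 * p.out)
  simp only [aux, Prod.mk.injEq] at h1
  rw [h1.1, h1.2] at hs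
  simpa using hs.symm

/-- Build a permutation representation from a raw action. -/
def toPerm {G X : Type} [Group G] (act : G → X → X)
    (h1 : ∀ x, act 1 x = x) (hm : ∀ g₁ g₂ x, act (g₁ * g₂) x = act g₁ (act g₂ x)) :
    G →* Equiv.Perm X where
  toFun g := ⟨act g, act g⁻¹,
    fun x => by rw [← hm, inv_mul_cancel, h1],
    fun x => by rw [← hm, mul_inv_cancel, h1]⟩
  map_one' := Equiv.ext h1
  map_mul' g₁ g₂ := Equiv.ext (hm g₁ g₂)

/-- Amalgamation for finite groups (no automorphisms). -/
theorem amalg {A B C : Type} [Group A] [Group B] [Group C]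
    [Finite A] [Finite B] [Finite C]
    (f : A →* B) (g : A →* C) (hf : Function.Injective f) (hg : Function.Injective g) :
    ∃ (D : Type) (_ : Group D) (_ : Finite D) (s : B →* D) (t : C →* D),
      Function.Injective s ∧ Function.Injective t ∧ s.comp f = t.comp g := by
  classical
  set X : Type := A × Quotient (S f) × Quotient (S g) with hX
  let actB : B → X → X := fun b z =>
    ⟨(aux f b ⟨z.1, z.2.1⟩).1, (aux f b ⟨z.1, z.2.1⟩).2, z.2.2⟩
  let actC : C → X → X := fun c z =>
    ⟨(aux g c ⟨z.1, z.2.2⟩).1, z.2.1, (aux g c ⟨z.1, z.2.2⟩).2⟩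
  have hB1 : ∀ z, actB 1 z = z := fun z => by
    simp only [actB, aux_one f hf]; rfl
  have hBm : ∀ b₁ b₂ z, actB (b₁ * b₂) z = actB b₁ (actB b₂ z) := fun b₁ b₂ z => by
    simp only [actB, aux_mul f b₁ b₂]
  have hC1 : ∀ z, actC 1 z = z := fun z => by
    simp only [actC, aux_one g hg]; rfl
  have hCm : ∀ c₁ c₂ z, actC (c₁ * c₂) z = actC c₁ (actC c₂ z) := fun c₁ c₂ z => by
    simp only [actC, aux_mul g c₁ c₂]
  refine ⟨Equiv.Perm X, inferInstance, inferInstance,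
    toPerm actB hB1 hBm, toPerm actC hC1 hCm, ?_, ?_, ?_⟩
  · rw [injective_iff_map_eq_one]
    intro b hb
    refine aux_faithful f hf (fun y => ?_)
    obtain ⟨q⟩ : Nonempty (Quotient (S g)) := ⟨Quotient.mk _ 1⟩
    have := congrFun (congrArg (fun e : Equiv.Perm X => (e : X → X)) hb) ⟨y.1, y.2, q⟩
    simpa [toPerm, actB] using congrArg (fun z : X => (z.1, z.2.1)) this
  · rw [injective_iff_map_eq_one]
    intro c hc
    refine aux_faithful g hg (fun y => ?_)
    obtain ⟨p⟩ : Nonempty (Quotient (S f)) := ⟨Quotient.mk _ 1⟩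
    have := congrFun (congrArg (fun e : Equiv.Perm X => (e : X → X)) hc) ⟨y.1, p, y.2⟩
    simpa [toPerm, actC] using congrArg (fun z : X => (z.1, z.2.2)) this
  · refine MonoidHom.ext fun a => Equiv.ext fun z => ?_
    show actB (f a) z = actC (g a) z
    simp [actB, actC, aux_f f hf, aux_f g hg]

end AmalgAux
private lemma autInvEquivariant {A B : Type} [Group A] [Group B] (f : A →* B)
    (σ : MulAut A) (τ : MulAut B) (h : ∀ a, f (σ a) = τ (f a)) (a : A) :
    f (σ⁻¹ a) = τ⁻¹ (f a) := by
  have h2 := h (σ⁻¹ a)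
  rw [MulAut.apply_inv_self] at h2
  refine τ.injective ?_
  rw [MulAut.apply_inv_self]
  exact h2.symm

open SemidirectProduct in
theorem finiteGroups_with_automorphisms_amalgamation
    (n : ℕ) (hn : 1 ≤ n)
    (A B C : Type) [Group A] [Group B] [Group C] [Finite A] [Finite B] [Finite C]
    (α : Fin n → MulAut A) (β : Fin n → MulAut B) (γ : Fin n → MulAut C)
    (f : A →* B) (g : A →* C)
    (hf : Function.Injective f) (hg : Function.Injective g)
    (hfα : ∀ i : Fin n, ∀ a : A, f (α i a) = β i (f a))
    (hgα : ∀ i : Fin n, ∀ a : A, g (α i a) = γ i (g a)) :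
    ∃ (D : Type) (_ : Group D) (_ : Finite D) (δ : Fin n → MulAut D)
      (s : B →* D) (t : C →* D),
      Function.Injective s ∧ Function.Injective t ∧
      (∀ i : Fin n, ∀ b : B, δ i (s b) = s (β i b)) ∧
      (∀ i : Fin n, ∀ c : C, δ i (t c) = t (γ i c)) ∧
      s.comp f = t.comp g := by
  classical
  -- the group generated by the automorphism systems
  set ρ : FreeGroup (Fin n) →* MulAut A × MulAut B × MulAut C :=
    FreeGroup.lift (fun i => (α i, β i, γ i)) with hρ
  set Q : Subgroup (MulAut A × MulAut B × MulAut C) := ρ.range with hQ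
  let φA : ↥Q →* MulAut A := (MonoidHom.fst _ _).comp Q.subtype
  let φB : ↥Q →* MulAut B :=
    (MonoidHom.fst _ _).comp ((MonoidHom.snd (MulAut A) _).comp Q.subtype)
  let φC : ↥Q →* MulAut C :=
    (MonoidHom.snd (MulAut B) _).comp ((MonoidHom.snd (MulAut A) _).comp Q.subtype)
  -- equivariance of f and g with respect to all words in the automorphisms
  have hfw : ∀ w : FreeGroup (Fin n), ∀ a : A, f ((ρ w).1 a) = (ρ w).2.1 (f a) := by
    intro w
    refine FreeGroup.induction_on (C := fun w => ∀ a : A, f ((ρ w).1 a) = (ρ w).2.1 (f a))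
      w (by simp) (fun i a => by
        have hpi : (pure i : FreeGroup (Fin n)) = FreeGroup.of i := rfl
        simpa [hpi, hρ, FreeGroup.lift_apply_of] using hfα i a)
      (fun i ih a => ?_) (fun x y hx hy a => by simp [map_mul, hx, hy])
    simp only [map_inv, Prod.fst_inv, Prod.snd_inv]
    exact autInvEquivariant f _ _ ih a
  have hgw : ∀ w : FreeGroup (Fin n), ∀ a : A, g ((ρ w).1 a) = (ρ w).2.2 (g a) := by
    intro w
    refine FreeGroup.induction_on (C := fun w => ∀ a : A, g ((ρ w).1 a) = (ρ w).2.2 (g a))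
      w (by simp) (fun i a => by
        have hpi : (pure i : FreeGroup (Fin n)) = FreeGroup.of i := rfl
        simpa [hpi, hρ, FreeGroup.lift_apply_of] using hgα i a)
      (fun i ih a => ?_) (fun x y hx hy a => by simp [map_mul, hx, hy])
    simp only [map_inv, Prod.fst_inv, Prod.snd_inv]
    exact autInvEquivariant g _ _ ih a
  have hfq : ∀ q : ↥Q, ∀ a : A, f (φA q a) = φB q (f a) := by
    rintro ⟨q, w, rfl⟩ a; exact hfw w a
  have hgq : ∀ q : ↥Q, ∀ a : A, g (φA q a) = φC q (g a) := by
    rintro ⟨q, w, rfl⟩ a; exact hgw w a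
  -- semidirect products are finite
  haveI : Finite (A ⋊[φA] ↥Q) :=
    Finite.of_surjective (fun p : A × ↥Q => (⟨p.1, p.2⟩ : A ⋊[φA] ↥Q))
      (fun x => ⟨(x.left, x.right), rfl⟩)
  haveI : Finite (B ⋊[φB] ↥Q) :=
    Finite.of_surjective (fun p : B × ↥Q => (⟨p.1, p.2⟩ : B ⋊[φB] ↥Q))
      (fun x => ⟨(x.left, x.right), rfl⟩)
  haveI : Finite (C ⋊[φC] ↥Q) :=
    Finite.of_surjective (fun p : C × ↥Q => (⟨p.1, p.2⟩ : C ⋊[φC] ↥Q))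
      (fun x => ⟨(x.left, x.right), rfl⟩)
  -- the induced maps between semidirect products
  let F : A ⋊[φA] ↥Q →* B ⋊[φB] ↥Q :=
    SemidirectProduct.lift (inl.comp f) inr (by
      intro q
      refine MonoidHom.ext fun a => ?_
      simp only [MonoidHom.comp_apply, MulEquiv.coe_toMonoidHom, MulAut.conj_apply]
      rw [hfq q a, SemidirectProduct.inl_aut, map_inv])
  let G : A ⋊[φA] ↥Q →* C ⋊[φC] ↥Q :=
    SemidirectProduct.lift (inl.comp g) inr (by
      intro q
      refine MonoidHom.ext fun a => ?_
      simp only [MonoidHom.comp_apply, MulEquiv.coe_toMonoidHom, MulAut.conj_apply]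
      rw [hgq q a, SemidirectProduct.inl_aut, map_inv])
  have hFleft : ∀ x : A ⋊[φA] ↥Q, (F x).left = f x.left ∧ (F x).right = x.right := by
    intro x
    rw [← SemidirectProduct.inl_left_mul_inr_right x, map_mul]
    simp [F, SemidirectProduct.lift_inl, SemidirectProduct.lift_inr,
      SemidirectProduct.mul_left, SemidirectProduct.mul_right]
  have hGleft : ∀ x : A ⋊[φA] ↥Q, (G x).left = g x.left ∧ (G x).right = x.right := by
    intro x
    rw [← SemidirectProduct.inl_left_mul_inr_right x, map_mul]
    simp [G, SemidirectProduct.lift_inl, SemidirectProduct.lift_inr,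
      SemidirectProduct.mul_left, SemidirectProduct.mul_right]
  have hFinj : Function.Injective F := by
    intro x y h
    refine SemidirectProduct.ext (hf ?_) ?_
    · rw [← (hFleft x).1, ← (hFleft y).1, h]
    · rw [← (hFleft x).2, ← (hFleft y).2, h]
  have hGinj : Function.Injective G := by
    intro x y h
    refine SemidirectProduct.ext (hg ?_) ?_
    · rw [← (hGleft x).1, ← (hGleft y).1, h]
    · rw [← (hGleft x).2, ← (hGleft y).2, h]
  -- amalgamate
  obtain ⟨D, _, _, s', t', hs', ht', hcomm⟩ := AmalgAux.amalg F G hFinj hGinj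
  let qi : Fin n → ↥Q := fun i => ⟨ρ (FreeGroup.of i), ⟨FreeGroup.of i, rfl⟩⟩
  have hst : ∀ q : ↥Q, s' (inr q) = t' (inr q) := by
    intro q
    have h1 : F (inr q) = inr q := SemidirectProduct.lift_inr _ _ _ q
    have h2 : G (inr q) = inr q := SemidirectProduct.lift_inr _ _ _ q
    have := congrArg (fun h : (A ⋊[φA] ↥Q) →* D => h (inr q)) hcomm
    simpa [h1, h2] using this
  have hφB : ∀ i, φB (qi i) = β i := by
    intro i
    show ((qi i : MulAut A × MulAut B × MulAut C)).2.1 = β i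
    simp [qi, hρ, FreeGroup.lift_apply_of]
  have hφC : ∀ i, φC (qi i) = γ i := by
    intro i
    show ((qi i : MulAut A × MulAut B × MulAut C)).2.2 = γ i
    simp [qi, hρ, FreeGroup.lift_apply_of]
  refine ⟨D, inferInstance, inferInstance,
    fun i => MulAut.conj (s' (inr (qi i))),
    s'.comp inl, t'.comp inl,
    hs'.comp SemidirectProduct.inl_injective, ht'.comp SemidirectProduct.inl_injective,
    ?_, ?_, ?_⟩
  · intro i b
    show s' (inr (qi i)) * s' (inl b) * (s' (inr (qi i)))⁻¹ = s' (inl (β i b))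
    rw [← map_inv, ← map_mul, ← map_mul, ← map_inv, ← SemidirectProduct.inl_aut, hφB]
  · intro i c
    show s' (inr (qi i)) * t' (inl c) * (s' (inr (qi i)))⁻¹ = t' (inl (γ i c))
    rw [hst, ← map_inv, ← map_mul, ← map_mul, ← map_inv, ← SemidirectProduct.inl_aut, hφC]
  · ext a
    have hFa : F (inl a) = inl (f a) := SemidirectProduct.lift_inl _ _ _ a
    have hGa : G (inl a) = inl (g a) := SemidirectProduct.lift_inl _ _ _ a
    have := congrArg (fun h : (A ⋊[φA] ↥Q) →* D => h (inl a)) hcomm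
    simpa [hFa, hGa] using this
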